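/- If T is a tree having no two adjacent vertices both of degree at least three, then χ⃗(T) ≤ 2. -/

import Mathlib

open SimpleGraph

/-- An orientation of a simple graph `G`: each edge gets exactly one direction.
`dir u v = true` means the edge `uv` is oriented from `u` toward `v` (head `v`). -/
structure Orient {V : Type*} (G : SimpleGraph V) where
  dir : V → V → Bool
  adj_of_dir : ∀ u v, dir u v = true → G.Adj u v
  dir_iff : ∀ u v, G.Adj u v → (dir u v = true ↔ ¬ dir v u = true)

/-- The indegree of a vertex in an orientation. -/
def Orient.inDeg {V : Type*} [Fintype V] {G : SimpleGraph V} (D : Orient G) (v : V) : ℕ :=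
  (Finset.univ.filter (fun u => D.dir u v = true)).card

/-- An orientation is proper if adjacent vertices have distinct indegrees. -/
def Orient.Proper {V : Type*} [Fintype V] {G : SimpleGraph V} (D : Orient G) : Prop :=
  ∀ u v, G.Adj u v → D.inDeg u ≠ D.inDeg v

/-- The proper orientation number: the least `k` such that `G` admits a proper
`k`-orientation (an orientation with all indegrees at most `k`). -/
noncomputable def properOrientNum {V : Type*} [Fintype V] (G : SimpleGraph V) : ℕ :=
  sInf {k | ∃ D : Orient G, D.Proper ∧ ∀ v, D.inDeg v ≤ k}

open Finset
section AuxProof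
variable {V : Type*}

/-- Delete all edges incident to `r`. -/
def cut (T : SimpleGraph V) (r : V) : SimpleGraph V where
  Adj u v := T.Adj u v ∧ u ≠ r ∧ v ≠ r
  symm := ⟨fun u v h => ⟨h.1.symm, h.2.2, h.2.1⟩⟩
  loopless := ⟨fun v h => T.loopless.irrefl v h.1⟩

lemma cut_adj {T : SimpleGraph V} {r u v : V} :
    (cut T r).Adj u v ↔ T.Adj u v ∧ u ≠ r ∧ v ≠ r := Iff.rfl

lemma cut_le (T : SimpleGraph V) (r : V) : cut T r ≤ T := fun _ _ h => h.1

instance cutDec (T : SimpleGraph V) [DecidableRel T.Adj] (r : V) [DecidableEq V] :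
    DecidableRel (cut T r).Adj :=
  fun u v => inferInstanceAs (Decidable (T.Adj u v ∧ u ≠ r ∧ v ≠ r))

variable [Fintype V] [DecidableEq V]

lemma neighborFinset_cut_ne {T : SimpleGraph V} [DecidableRel T.Adj] {r v : V} (hv : v ≠ r) :
    (cut T r).neighborFinset v = (T.neighborFinset v).erase r := by
  ext u
  simp only [mem_neighborFinset, cut_adj, Finset.mem_erase]
  constructor
  · rintro ⟨h1, h2, h3⟩; exact ⟨fun h => h3 h, h1⟩
  · rintro ⟨h1, h2⟩; exact ⟨h2, hv, fun h => h1 h⟩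

lemma neighborFinset_cut_self {T : SimpleGraph V} [DecidableRel T.Adj] (r : V) :
    (cut T r).neighborFinset r = ∅ := by
  ext u; simp [mem_neighborFinset, cut_adj]

lemma degree_cut_self {T : SimpleGraph V} [DecidableRel T.Adj] (r : V) :
    (cut T r).degree r = 0 := by
  rw [← card_neighborFinset_eq_degree, neighborFinset_cut_self]; simp

lemma degree_cut_of_adj {T : SimpleGraph V} [DecidableRel T.Adj] {r v : V} (h : T.Adj r v) :
    (cut T r).degree v = T.degree v - 1 := by
  rw [← card_neighborFinset_eq_degree, neighborFinset_cut_ne h.ne',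
    Finset.card_erase_of_mem (by simpa [mem_neighborFinset] using h.symm),
    card_neighborFinset_eq_degree]

lemma degree_cut_of_not_adj {T : SimpleGraph V} [DecidableRel T.Adj] {r v : V}
    (h : ¬ T.Adj r v) (hv : v ≠ r) : (cut T r).degree v = T.degree v := by
  rw [← card_neighborFinset_eq_degree, neighborFinset_cut_ne hv,
    Finset.erase_eq_of_notMem (by simpa [mem_neighborFinset] using fun hh => h hh.symm),
    card_neighborFinset_eq_degree]

lemma degree_cut_le {T : SimpleGraph V} [DecidableRel T.Adj] (r v : V) :
    (cut T r).degree v ≤ T.degree v := by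
  by_cases hv : v = r
  · subst hv; rw [degree_cut_self]; exact Nat.zero_le _
  by_cases h : T.Adj r v
  · rw [degree_cut_of_adj h]; omega
  · rw [degree_cut_of_not_adj h hv]

lemma edgeFinset_cut {T : SimpleGraph V} [DecidableRel T.Adj] (r : V) :
    (cut T r).edgeFinset = T.edgeFinset \ T.incidenceFinset r := by
  ext e
  induction e with
  | _ u v =>
    simp only [mem_edgeFinset, Finset.mem_sdiff, mem_incidenceFinset, mem_edgeSet, cut_adj,
      mk'_mem_incidenceSet_iff]
    constructor
    · rintro ⟨h1, h2, h3⟩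
      exact ⟨h1, fun ⟨_, hc⟩ => hc.elim (fun e => h2 e.symm) (fun e => h3 e.symm)⟩
    · rintro ⟨h1, h2⟩
      refine ⟨h1, fun e => h2 ⟨h1, Or.inl e.symm⟩, fun e => h2 ⟨h1, Or.inr e.symm⟩⟩

lemma card_edgeFinset_cut {T : SimpleGraph V} [DecidableRel T.Adj] (r : V) :
    (cut T r).edgeFinset.card + T.degree r = T.edgeFinset.card := by
  rw [edgeFinset_cut, Finset.card_sdiff_of_subset (by
    intro e he; rw [mem_incidenceFinset] at he; exact mem_edgeFinset.2 he.1),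
    T.card_incidenceFinset_eq_degree]
  have : T.incidenceFinset r ⊆ T.edgeFinset := by
    intro e he; rw [mem_incidenceFinset] at he; exact mem_edgeFinset.2 he.1
  have h2 := Finset.card_le_card this
  rw [T.card_incidenceFinset_eq_degree] at h2
  omega

section Walks
variable {T : SimpleGraph V} {r : V}

lemma cutWalk_not_mem_support : ∀ {x v : V}, (p : (cut T r).Walk x v) → x ≠ r → r ∉ p.support := by
  intro x v p
  induction p with
  | nil => intro hx; simp [Ne.symm hx]
  | cons h p ih =>
    intro hx
    rw [SimpleGraph.Walk.support_cons, List.mem_cons, not_or]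
    exact ⟨fun hh => hx hh.symm, ih h.2.2⟩

/-- Transfer a walk avoiding `r` into the cut graph. -/
noncomputable def walkToCut {x v : V} (p : T.Walk x v) (h : r ∉ p.support) : (cut T r).Walk x v :=
  p.transfer (cut T r) (by
    intro e he
    induction e with
    | _ a b =>
      rw [mem_edgeSet, cut_adj]
      refine ⟨p.edges_subset_edgeSet he, ?_, ?_⟩
      · exact fun hh => h (hh ▸ SimpleGraph.Walk.fst_mem_support_of_mem_edges p he)
      · exact fun hh => h (hh ▸ SimpleGraph.Walk.snd_mem_support_of_mem_edges p he))

lemma reachable_of_cut_reachable {x v : V} (h : (cut T r).Reachable x v) : T.Reachable x v :=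
  h.mono (cut_le T r)

lemma cut_reachable_of_not_reach_r {x v : V} (h : T.Reachable x v) (hr : ¬ T.Reachable x r) :
    (cut T r).Reachable x v := by
  obtain ⟨w⟩ := h
  have hrw : r ∉ w.support := fun hmem => hr ⟨w.takeUntil r hmem⟩
  exact ⟨walkToCut w hrw⟩

lemma cut_reachable_of_reach_r {v : V} (h : T.Reachable r v) (hv : v ≠ r) :
    ∃ x, T.Adj r x ∧ (cut T r).Reachable x v := by
  obtain ⟨w⟩ := h
  obtain ⟨p, hp⟩ := w.toPath
  cases p with
  | nil => exact absurd rfl (Ne.symm hv)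
  | cons hadj q =>
    rw [SimpleGraph.Walk.cons_isPath_iff] at hp
    exact ⟨_, hadj, ⟨walkToCut q hp.2⟩⟩

lemma cut_isAcyclic (hT : T.IsAcyclic) : (cut T r).IsAcyclic := by
  intro v c hc
  exact hT _ (hc.transfer (fun e he => edgeSet_mono (cut_le T r) (c.edges_subset_edgeSet he)))

lemma not_cut_reachable_of_adj (hT : T.IsAcyclic) {x y : V} (hx : T.Adj r x) (hy : T.Adj r y)
    (hxy : x ≠ y) : ¬ (cut T r).Reachable x y := by
  intro hreach
  obtain ⟨q0⟩ := hreach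
  have hq0 : r ∉ q0.support := cutWalk_not_mem_support q0 hx.ne'
  have hsub : ∀ e ∈ q0.edges, e ∈ T.edgeSet :=
    fun e he => edgeSet_mono (cut_le T r) (q0.edges_subset_edgeSet he)
  have hqs : r ∉ (q0.transfer T hsub).support := by
    rw [SimpleGraph.Walk.support_transfer]; exact hq0
  have hq2 : r ∉ (q0.transfer T hsub).toPath.1.support :=
    fun hm => hqs (SimpleGraph.Walk.support_toPath_subset _ hm)
  have hP2 : (SimpleGraph.Walk.cons hx ((q0.transfer T hsub).toPath.1)).IsPath :=
    (SimpleGraph.Walk.cons_isPath_iff _ _).2 ⟨(q0.transfer T hsub).toPath.2, hq2⟩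
  have huniq := (isAcyclic_iff_path_unique.mp hT) (SimpleGraph.Path.singleton hy)
    ⟨SimpleGraph.Walk.cons hx ((q0.transfer T hsub).toPath.1), hP2⟩
  have hsupp := congrArg (fun p : T.Path r y => (p : T.Walk r y).support) huniq
  simp only [SimpleGraph.Path.singleton, SimpleGraph.Walk.support_cons,
    SimpleGraph.Walk.support_nil] at hsupp
  have : x ∈ ((q0.transfer T hsub).toPath.1).support := SimpleGraph.Walk.start_mem_support _
  have h2 := (List.cons.injEq _ _ _ _ ▸ hsupp : r = r ∧ [y] = _).2
  rw [← h2] at this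
  simp at this
  exact hxy this

end Walks

section Orientations
variable {T : SimpleGraph V} {r : V}

/-- The trivial orientation of an edgeless graph. -/
def Orient.triv (T : SimpleGraph V) (h : ∀ u v, ¬ T.Adj u v) : Orient T :=
  ⟨fun _ _ => false, fun u v hd => by simp at hd, fun u v hadj => absurd hadj (h u v)⟩

lemma Orient.inDeg_triv (h : ∀ u v, ¬ T.Adj u v) (v : V) : (Orient.triv T h).inDeg v = 0 := by
  simp [Orient.inDeg, Orient.triv]

lemma Orient.inDeg_eq_zero_of_degree_zero [DecidableRel T.Adj] (D : Orient T) {v : V}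
    (h : T.degree v = 0) : D.inDeg v = 0 := by
  rw [Orient.inDeg, Finset.card_eq_zero, Finset.filter_eq_empty_iff]
  intro u _ hd
  have hadj := (D.adj_of_dir u v hd).symm
  have : u ∈ T.neighborFinset v := (mem_neighborFinset _ _ _).2 hadj
  have := Finset.card_pos.2 ⟨u, this⟩
  rw [card_neighborFinset_eq_degree, h] at this
  omega

lemma dir_self_false {G : SimpleGraph V} (D : Orient G) (u v : V) (h : ¬ G.Adj u v) :
    D.dir u v = false :=
  Bool.eq_false_iff.mpr fun hd => h (D.adj_of_dir u v hd)

/-- Extend an orientation of `cut T r` to `T`: if `b`, all edges at `r` point away from `r`;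
otherwise all edges at `r` point into `r`. -/
def extendO (T : SimpleGraph V) [DecidableRel T.Adj] (r : V) (b : Bool)
    (D : Orient (cut T r)) : Orient T where
  dir u v :=
    if u = r then (b && decide (T.Adj r v))
    else if v = r then (!b && decide (T.Adj u r))
    else D.dir u v
  adj_of_dir := by
    intro u v hd
    split at hd
    · rename_i hu
      rw [Bool.and_eq_true, decide_eq_true_eq] at hd
      rw [hu]; exact hd.2
    · split at hd
      · rename_i hv
        rw [Bool.and_eq_true, decide_eq_true_eq] at hd
        rw [hv]; exact hd.2
      · exact (D.adj_of_dir u v hd).1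
  dir_iff := by
    intro u v hadj
    by_cases hu : u = r
    · have hv : v ≠ r := by rw [hu] at hadj; exact hadj.ne'
      have h1 : T.Adj r v := by rw [← hu]; exact hadj
      rw [if_pos hu, if_neg hv, if_pos hu]
      simp only [h1, h1.symm, decide_true, Bool.and_true]
      cases b <;> simp
    · by_cases hv : v = r
      · have h1 : T.Adj u r := by rw [← hv]; exact hadj
        rw [if_neg hu, if_pos hv, if_pos hv]
        simp only [h1, h1.symm, decide_true, Bool.and_true]
        cases b <;> simp
      · rw [if_neg hu, if_neg hv, if_neg hv, if_neg hu]
        exact D.dir_iff u v ⟨hadj, hu, hv⟩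

lemma extendO_dir_left [DecidableRel T.Adj] (b : Bool) (D : Orient (cut T r)) (v : V) :
    (extendO T r b D).dir r v = (b && decide (T.Adj r v)) := by
  show (if r = r then _ else _) = _
  rw [if_pos rfl]

lemma extendO_dir_right [DecidableRel T.Adj] (b : Bool) (D : Orient (cut T r)) {u : V}
    (hu : u ≠ r) : (extendO T r b D).dir u r = (!b && decide (T.Adj u r)) := by
  show (if u = r then _ else if r = r then _ else _) = _
  rw [if_neg hu, if_pos rfl]

lemma extendO_dir_other [DecidableRel T.Adj] (b : Bool) (D : Orient (cut T r)) {u v : V}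
    (hu : u ≠ r) (hv : v ≠ r) : (extendO T r b D).dir u v = D.dir u v := by
  show (if u = r then _ else if v = r then _ else _) = _
  rw [if_neg hu, if_neg hv]

lemma inDeg_extendO_ne [DecidableRel T.Adj] (b : Bool) (D : Orient (cut T r)) {v : V}
    (hv : v ≠ r) :
    (extendO T r b D).inDeg v = D.inDeg v + (if b = true ∧ T.Adj r v then 1 else 0) := by
  classical
  have hDr : D.dir r v = false :=
    dir_self_false D r v (by rw [cut_adj]; rintro ⟨-, h, -⟩; exact h rfl)
  rw [Orient.inDeg, Orient.inDeg]
  have hset : (Finset.univ.filter (fun u => (extendO T r b D).dir u v = true)) =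
      if b = true ∧ T.Adj r v then insert r (Finset.univ.filter (fun u => D.dir u v = true))
      else (Finset.univ.filter (fun u => D.dir u v = true)) := by
    ext u
    by_cases hu : u = r
    · rw [hu]
      simp only [Finset.mem_filter, Finset.mem_univ, true_and, extendO_dir_left]
      split
      · rename_i hcond
        simp [hcond.1, hcond.2, Finset.mem_insert]
      · rename_i hcond
        simp only [hDr, Bool.and_eq_true, decide_eq_true_eq, Finset.mem_filter,
          Finset.mem_univ, true_and]
        constructor
        · intro hb; exact absurd hb hcond
        · simp
    · simp only [Finset.mem_filter, Finset.mem_univ, true_and, extendO_dir_other b D hu hv]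
      split
      · simp [Finset.mem_insert, hu]
      · simp
  rw [hset]
  split
  · rw [Finset.card_insert_of_notMem (by simp [hDr])]
  · rw [Nat.add_zero]

lemma inDeg_extendO_self [DecidableRel T.Adj] (b : Bool) (D : Orient (cut T r)) :
    (extendO T r b D).inDeg r = if b = true then 0 else T.degree r := by
  classical
  rw [Orient.inDeg]
  cases b with
  | true =>
    rw [if_pos rfl, Finset.card_eq_zero, Finset.filter_eq_empty_iff]
    intro u _
    by_cases hu : u = r
    · rw [hu, extendO_dir_left]
      simp [T.loopless.irrefl r]
    · rw [extendO_dir_right true D hu]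
      simp
  | false =>
    rw [if_neg (by simp), ← card_neighborFinset_eq_degree]
    congr 1
    ext u
    simp only [Finset.mem_filter, Finset.mem_univ, true_and]
    by_cases hu : u = r
    · rw [hu, extendO_dir_left]
      simp [T.loopless.irrefl r, mem_neighborFinset]
    · rw [extendO_dir_right false D hu]
      simp only [Bool.not_false, Bool.true_and, decide_eq_true_eq, Finset.mem_filter,
        Finset.mem_univ, true_and, mem_neighborFinset]
      exact ⟨fun h => h.symm, fun h => h.symm⟩

end Orientations

section Bgg
variable {T : SimpleGraph V} {r : V}

/-- `v` counts as a "big" vertex: degree (plus a bonus for roots) at least 3. -/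
def bgg (T : SimpleGraph V) [DecidableRel T.Adj] (R : Finset V) (v : V) : Prop :=
  3 ≤ T.degree v + (if v ∈ R then 1 else 0)

lemma bgg_mono [DecidableRel T.Adj] {R₁ R₂ : Finset V} (h : R₁ ⊆ R₂) {v : V}
    (hb : bgg T R₁ v) : bgg T R₂ v := by
  unfold bgg at *
  by_cases h1 : v ∈ R₁
  · rw [if_pos (h h1)]; rw [if_pos h1] at hb; exact hb
  · rw [if_neg h1] at hb; split <;> omega

lemma degree_pos_of_adj [DecidableRel T.Adj] {u v : V} (h : T.Adj u v) : 0 < T.degree u := by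
  rw [← card_neighborFinset_eq_degree]
  exact Finset.card_pos.2 ⟨v, (mem_neighborFinset _ _ _).2 h⟩

lemma reachable_isolated [DecidableRel T.Adj] {v : V} (hdr : T.degree r = 0)
    (h : T.Reachable r v) : v = r := by
  obtain ⟨w⟩ := h
  cases w with
  | nil => rfl
  | cons h p => exact absurd (degree_pos_of_adj h) (by omega)

lemma bgg_cut [DecidableRel T.Adj] {R : Finset V} {w : V} (hw : w ≠ r)
    (hN : ∀ x ∈ T.neighborFinset r, x ∉ R) :
    bgg (cut T r) (R.erase r ∪ T.neighborFinset r) w ↔ bgg T R w := by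
  unfold bgg
  by_cases hA : T.Adj r w
  · have hwN : w ∈ T.neighborFinset r := (mem_neighborFinset _ _ _).2 hA
    have hwR : w ∉ R := hN w hwN
    have hd1 : 0 < T.degree w := degree_pos_of_adj hA.symm
    rw [degree_cut_of_adj hA, if_pos (Finset.mem_union_right _ hwN), if_neg hwR]
    omega
  · have hwN : w ∉ T.neighborFinset r := fun hh => hA ((mem_neighborFinset _ _ _).1 hh)
    rw [degree_cut_of_not_adj hA hw]
    have : w ∈ R.erase r ∪ T.neighborFinset r ↔ w ∈ R := by
      simp [Finset.mem_union, Finset.mem_erase, hw, hwN]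
    by_cases hwR : w ∈ R
    · rw [if_pos (this.2 hwR), if_pos hwR]
    · rw [if_neg (fun hh => hwR (this.1 hh)), if_neg hwR]

lemma edgeless_case (T : SimpleGraph V) [DecidableRel T.Adj] (R : Finset V) (c : V → ℕ)
    (hc1 : ∀ v, c v ≤ 1) (hE : ∀ u v, ¬ T.Adj u v) :
    ∃ D : Orient T, (∀ v, D.inDeg v + c v ≤ 2) ∧
      (∀ u v, T.Adj u v → D.inDeg u + c u ≠ D.inDeg v + c v) ∧
      (∀ v ∈ R, c v = 0 → D.inDeg v ≤ 1 ∧ (bgg T R v → D.inDeg v = 0)) := by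
  refine ⟨Orient.triv T hE, ?_, ?_, ?_⟩
  · intro v; rw [Orient.inDeg_triv]; have := hc1 v; omega
  · intro u v hadj; exact absurd hadj (hE u v)
  · intro v _ _; rw [Orient.inDeg_triv]; exact ⟨by omega, fun _ => rfl⟩

end Bgg

lemma main_lemma :
    ∀ (n : ℕ) (T : SimpleGraph V) [inst : DecidableRel T.Adj] (R : Finset V) (c : V → ℕ),
      2 * T.edgeFinset.card + R.card ≤ n →
      T.IsAcyclic →
      (∀ v, c v ≤ 1) →
      (∀ v, v ∉ R → c v = 0) →
      (∀ v, c v = 1 → T.degree v ≤ 1) →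
      (∀ u v, T.Adj u v → ¬ (bgg T R u ∧ bgg T R v)) →
      (∀ x y, x ∈ R → y ∈ R → x ≠ y → ¬ T.Reachable x y) →
      (∀ v, 0 < T.degree v → ∃ x ∈ R, T.Reachable x v) →
      ∃ D : Orient T, (∀ v, D.inDeg v + c v ≤ 2) ∧
        (∀ u v, T.Adj u v → D.inDeg u + c u ≠ D.inDeg v + c v) ∧
        (∀ v ∈ R, c v = 0 → D.inDeg v ≤ 1 ∧ (bgg T R v → D.inDeg v = 0)) := by
  intro n
  induction n with
  | zero =>
    intro T inst R c hmeas _ hc1 _ _ _ _ _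
    have hE : T.edgeFinset.card = 0 := by omega
    refine edgeless_case T R c hc1 ?_
    intro u v hadj
    have : s(u, v) ∈ T.edgeFinset := mem_edgeFinset.2 hadj
    rw [Finset.card_eq_zero.1 hE] at this
    exact absurd this (Finset.notMem_empty _)
  | succ n ih =>
    intro T inst R c hmeas hacy hc1 hc0 hcdeg hind hsep hcov
    rcases R.eq_empty_or_nonempty with hR | ⟨r, hrR⟩
    · -- no roots: graph is edgeless
      refine edgeless_case T R c hc1 ?_
      intro u v hadj
      obtain ⟨x, hx, -⟩ := hcov u (degree_pos_of_adj hadj)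
      rw [hR] at hx
      exact absurd hx (Finset.notMem_empty _)
    by_cases hdr : T.degree r = 0
    · -- isolated root: drop it
      have hnadj : ∀ v, ¬ T.Adj r v := fun v h => absurd (degree_pos_of_adj h) (by omega)
      have hR1 : 1 ≤ R.card := Finset.card_pos.2 ⟨r, hrR⟩
      obtain ⟨D, b1, b2, b3⟩ := ih T (R.erase r) (Function.update c r 0)
        (by rw [Finset.card_erase_of_mem hrR]; omega)
        hacy
        (by intro v; rw [Function.update_apply]; split
            · omega
            · exact hc1 v)
        (by intro v hv; rw [Function.update_apply]; split
            · rfl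
            · rename_i hvr
              exact hc0 v (fun hvR => hv (Finset.mem_erase.2 ⟨hvr, hvR⟩)))
        (by intro v hv1; rw [Function.update_apply] at hv1
            split at hv1
            · omega
            · exact hcdeg v hv1)
        (by intro u v hadj hb
            exact hind u v hadj ⟨bgg_mono (Finset.erase_subset r R) hb.1,
              bgg_mono (Finset.erase_subset r R) hb.2⟩)
        (by intro x y hx hy hxy
            exact hsep x y (Finset.mem_of_mem_erase hx) (Finset.mem_of_mem_erase hy) hxy)
        (by intro v hdv
            obtain ⟨x, hxR, hreach⟩ := hcov v hdv
            have hxr : x ≠ r := by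
              rintro rfl
              rw [reachable_isolated hdr hreach] at hdv
              omega
            exact ⟨x, Finset.mem_erase.2 ⟨hxr, hxR⟩, hreach⟩)
      have hDr : D.inDeg r = 0 := D.inDeg_eq_zero_of_degree_zero hdr
      refine ⟨D, ?_, ?_, ?_⟩
      · intro v
        by_cases hv : v = r
        · rw [hv, hDr]; have := hc1 r; omega
        · have := b1 v; rw [Function.update_apply, if_neg hv] at this; exact this
      · intro u v hadj
        have hu : u ≠ r := fun h => hnadj v (h ▸ hadj)
        have hv : v ≠ r := fun h => hnadj u (h ▸ hadj.symm)
        have := b2 u v hadj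
        rw [Function.update_apply, Function.update_apply, if_neg hu, if_neg hv] at this
        exact this
      · intro v hvR hcv
        by_cases hv : v = r
        · rw [hv, hDr]; exact ⟨by omega, fun _ => rfl⟩
        · have h3 := b3 v (Finset.mem_erase.2 ⟨hv, hvR⟩)
            (by rw [Function.update_apply, if_neg hv]; exact hcv)
          refine ⟨h3.1, fun hb => h3.2 ?_⟩
          unfold bgg at hb ⊢
          rw [if_pos hvR] at hb
          rw [if_pos (Finset.mem_erase.2 ⟨hv, hvR⟩)]
          exact hb
    · -- the root has an edge
      have hNnotR : ∀ x ∈ T.neighborFinset r, x ∉ R := by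
        intro x hx hxR
        have hadj : T.Adj r x := (mem_neighborFinset _ _ _).1 hx
        exact hsep r x hrR hxR hadj.ne hadj.reachable
      have hNc0 : ∀ x ∈ T.neighborFinset r, c x = 0 := fun x hx => hc0 x (hNnotR x hx)
      have hEc := card_edgeFinset_cut (T := T) r
      have hR1 : 1 ≤ R.card := Finset.card_pos.2 ⟨r, hrR⟩
      have hRcard : (R.erase r ∪ T.neighborFinset r).card ≤ R.card - 1 + T.degree r := by
        calc (R.erase r ∪ T.neighborFinset r).card
            ≤ (R.erase r).card + (T.neighborFinset r).card := Finset.card_union_le _ _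
          _ = R.card - 1 + T.degree r := by
              rw [Finset.card_erase_of_mem hrR, card_neighborFinset_eq_degree]
      have hmeas' : 2 * (cut T r).edgeFinset.card + (R.erase r ∪ T.neighborFinset r).card ≤ n := by
        omega
      have hacy' := cut_isAcyclic (r := r) hacy
      have hsep' : ∀ x y, x ∈ R.erase r ∪ T.neighborFinset r →
          y ∈ R.erase r ∪ T.neighborFinset r → x ≠ y → ¬ (cut T r).Reachable x y := by
        intro x y hx hy hxy hreach
        rcases Finset.mem_union.1 hx with hx1 | hx2 <;> rcases Finset.mem_union.1 hy with hy1 | hy2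
        · exact hsep x y (Finset.mem_of_mem_erase hx1) (Finset.mem_of_mem_erase hy1) hxy
            (reachable_of_cut_reachable hreach)
        · refine hsep x r (Finset.mem_of_mem_erase hx1) hrR (Finset.ne_of_mem_erase hx1) ?_
          exact (reachable_of_cut_reachable hreach).trans
            ((mem_neighborFinset _ _ _).1 hy2).reachable.symm
        · refine hsep y r (Finset.mem_of_mem_erase hy1) hrR (Finset.ne_of_mem_erase hy1) ?_
          exact (reachable_of_cut_reachable hreach.symm).trans
            ((mem_neighborFinset _ _ _).1 hx2).reachable.symm
        · exact not_cut_reachable_of_adj hacy ((mem_neighborFinset _ _ _).1 hx2)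
            ((mem_neighborFinset _ _ _).1 hy2) hxy hreach
      have hcov' : ∀ v, 0 < (cut T r).degree v →
          ∃ x ∈ R.erase r ∪ T.neighborFinset r, (cut T r).Reachable x v := by
        intro v hdv'
        have hvr : v ≠ r := by rintro rfl; rw [degree_cut_self] at hdv'; omega
        have hdv : 0 < T.degree v := lt_of_lt_of_le hdv' (degree_cut_le r v)
        obtain ⟨x, hxR, hreach⟩ := hcov v hdv
        by_cases hxr : x = r
        · rw [hxr] at hreach
          obtain ⟨y, hry, hreach'⟩ := cut_reachable_of_reach_r hreach hvr
          exact ⟨y, Finset.mem_union_right _ ((mem_neighborFinset _ _ _).2 hry), hreach'⟩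
        · have hnr : ¬ T.Reachable x r := hsep x r hxR hrR hxr
          exact ⟨x, Finset.mem_union_left _ (Finset.mem_erase.2 ⟨hxr, hxR⟩),
            cut_reachable_of_not_reach_r hreach hnr⟩
      have hind' : ∀ u v, (cut T r).Adj u v →
          ¬ (bgg (cut T r) (R.erase r ∪ T.neighborFinset r) u ∧
             bgg (cut T r) (R.erase r ∪ T.neighborFinset r) v) := by
        intro u v hadj' hb
        exact hind u v hadj'.1 ⟨(bgg_cut hadj'.2.1 hNnotR).1 hb.1,
          (bgg_cut hadj'.2.2 hNnotR).1 hb.2⟩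
      by_cases hsm : c r = 0 ∧ ∀ x ∈ T.neighborFinset r, T.degree x ≤ 2
      · -- OUT case: all edges at r point away from r
        obtain ⟨D', b1, b2, b3⟩ := ih (cut T r) (R.erase r ∪ T.neighborFinset r)
          (fun v => if T.Adj r v then 1 else c v) hmeas' hacy'
          (by intro v; split
              · omega
              · exact hc1 v)
          (by intro v hv
              have hvn : ¬ T.Adj r v :=
                fun h => hv (Finset.mem_union_right _ ((mem_neighborFinset _ _ _).2 h))
              rw [if_neg hvn]
              by_cases hvr : v = r
              · rw [hvr]; exact hsm.1
              · exact hc0 v (fun hvR => hv (Finset.mem_union_left _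
                  (Finset.mem_erase.2 ⟨hvr, hvR⟩))))
          (by intro v hv1
              by_cases hA : T.Adj r v
              · rw [degree_cut_of_adj hA]
                have := hsm.2 v ((mem_neighborFinset _ _ _).2 hA)
                omega
              · rw [if_neg hA] at hv1
                exact le_trans (degree_cut_le r v) (hcdeg v hv1))
          hind' hsep' hcov'
        have hfr : (extendO T r true D').inDeg r = 0 := by rw [inDeg_extendO_self]; simp
        have hfv : ∀ v, v ≠ r → (extendO T r true D').inDeg v + c v
            = D'.inDeg v + (if T.Adj r v then 1 else c v) := by
          intro v hv
          rw [inDeg_extendO_ne true D' hv]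
          by_cases hA : T.Adj r v
          · rw [if_pos ⟨rfl, hA⟩, if_pos hA, hNc0 v ((mem_neighborFinset _ _ _).2 hA)]
          · rw [if_neg (fun hh : true = true ∧ T.Adj r v => hA hh.2), if_neg hA]
            omega
        refine ⟨extendO T r true D', ?_, ?_, ?_⟩
        · intro v
          by_cases hv : v = r
          · rw [hv, hfr, hsm.1]
            omega
          · rw [hfv v hv]; exact b1 v


        · intro u v hadj
          by_cases hu : u = r
          · rw [hu] at hadj ⊢
            rw [hfr, hsm.1, hfv v hadj.ne', if_pos hadj]
            omega
          · by_cases hv : v = r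
            · rw [hv] at hadj ⊢
              have hA : T.Adj r u := hadj.symm
              rw [hfr, hsm.1, hfv u hA.ne', if_pos hA]
              omega
            · rw [hfv u hu, hfv v hv]
              exact b2 u v ⟨hadj, hu, hv⟩
        · intro v hvR hcv
          by_cases hv : v = r
          · rw [hv, hfr]; exact ⟨by omega, fun _ => rfl⟩
          · have hvnN : ¬ T.Adj r v :=
              fun h => hNnotR v ((mem_neighborFinset _ _ _).2 h) hvR
            have hin' : (extendO T r true D').inDeg v = D'.inDeg v := by
              rw [inDeg_extendO_ne true D' hv,
                if_neg (fun hh : true = true ∧ T.Adj r v => hvnN hh.2)]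
              omega
            have h3 := b3 v (Finset.mem_union_left _ (Finset.mem_erase.2 ⟨hv, hvR⟩))
              (by rw [if_neg hvnN]; exact hcv)
            rw [hin']
            exact ⟨h3.1, fun hb => h3.2 ((bgg_cut hv hNnotR).2 hb)⟩
      · -- IN case: the root has degree 1 and its edge points into r
        have hdr1 : T.degree r = 1 := by
          by_cases hcr : c r = 1
          · have := hcdeg r hcr; omega
          · have hcr0 : c r = 0 := by have := hc1 r; omega
            rw [not_and_or] at hsm
            rcases hsm with h | h
            · exact absurd hcr0 h
            · push_neg at h
              obtain ⟨y, hyN, hy3⟩ := h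
              have hadj : T.Adj r y := (mem_neighborFinset _ _ _).1 hyN
              have hbgy : bgg T R y := by
                unfold bgg; rw [if_neg (hNnotR y hyN)]; omega
              have hnr : ¬ bgg T R r := fun hb => hind r y hadj ⟨hb, hbgy⟩
              unfold bgg at hnr
              rw [if_pos hrR] at hnr
              omega
        obtain ⟨x, hNx⟩ : ∃ x, T.neighborFinset r = {x} := by
          apply Finset.card_eq_one.1
          rw [card_neighborFinset_eq_degree, hdr1]
        have hxN : x ∈ T.neighborFinset r := by rw [hNx]; exact Finset.mem_singleton_self x
        have hrx : T.Adj r x := (mem_neighborFinset _ _ _).1 hxN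
        have hxr : x ≠ r := hrx.ne'
        have hcx : c x = 0 := hNc0 x hxN
        have hxprop : c r = 1 ∨ (c r = 0 ∧ 3 ≤ T.degree x) := by
          by_cases hcr : c r = 1
          · exact Or.inl hcr
          · have hcr0 : c r = 0 := by have := hc1 r; omega
            rw [not_and_or] at hsm
            rcases hsm with h | h
            · exact absurd hcr0 h
            · push_neg at h
              obtain ⟨y, hyN, hy3⟩ := h
              have : y = x := by rw [hNx] at hyN; exact Finset.mem_singleton.1 hyN
              rw [this] at hy3
              exact Or.inr ⟨hcr0, by omega⟩
        obtain ⟨D', b1, b2, b3⟩ := ih (cut T r) (R.erase r ∪ T.neighborFinset r)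
          (Function.update c r 0) hmeas' hacy'
          (by intro v; rw [Function.update_apply]; split
              · omega
              · exact hc1 v)
          (by intro v hv; rw [Function.update_apply]; split
              · rfl
              · rename_i hvr
                refine hc0 v (fun hvR => hv (Finset.mem_union_left _
                  (Finset.mem_erase.2 ⟨hvr, hvR⟩))))
          (by intro v hv1; rw [Function.update_apply] at hv1
              split at hv1
              · omega
              · exact le_trans (degree_cut_le r v) (hcdeg v hv1))
          hind' hsep' hcov'
        have hfr : (extendO T r false D').inDeg r = 1 := by
          rw [inDeg_extendO_self]; simp [hdr1]
        have hfv : ∀ v, v ≠ r → (extendO T r false D').inDeg v = D'.inDeg v := by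
          intro v hv
          rw [inDeg_extendO_ne false D' hv, if_neg (by rintro ⟨h, -⟩; simp at h)]
          omega
        have hcup : ∀ v, v ≠ r → Function.update c r 0 v = c v :=
          fun v hv => Function.update_of_ne hv 0 c
        have hxR' : x ∈ R.erase r ∪ T.neighborFinset r := Finset.mem_union_right _ hxN
        have hx3 := b3 x hxR' (by rw [hcup x hxr]; exact hcx)
        refine ⟨extendO T r false D', ?_, ?_, ?_⟩
        · intro v
          by_cases hv : v = r
          · rw [hv, hfr]; have := hc1 r; omega
          · rw [hfv v hv]
            have := b1 v; rw [hcup v hv] at this; exact this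
        · intro u v hadj
          by_cases hu : u = r
          · rw [hu] at hadj ⊢
            have hvx : v = x := by
              have : v ∈ T.neighborFinset r := (mem_neighborFinset _ _ _).2 hadj
              rw [hNx] at this; exact Finset.mem_singleton.1 this
            rw [hvx, hfr, hfv x hxr, hcx]
            rcases hxprop with h1 | ⟨h0, h3⟩
            · rw [h1]; have := hx3.1; omega
            · rw [h0]
              have hbgg : bgg (cut T r) (R.erase r ∪ T.neighborFinset r) x := by
                unfold bgg
                rw [degree_cut_of_adj hrx, if_pos hxR']
                omega
              have := hx3.2 hbgg
              omega
          · by_cases hv : v = r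
            · rw [hv] at hadj ⊢
              have hux : u = x := by
                have : u ∈ T.neighborFinset r := (mem_neighborFinset _ _ _).2 hadj.symm
                rw [hNx] at this; exact Finset.mem_singleton.1 this
              rw [hux, hfr, hfv x hxr, hcx]
              rcases hxprop with h1 | ⟨h0, h3⟩
              · rw [h1]; have := hx3.1; omega
              · rw [h0]
                have hbgg : bgg (cut T r) (R.erase r ∪ T.neighborFinset r) x := by
                  unfold bgg
                  rw [degree_cut_of_adj hrx, if_pos hxR']
                  omega
                have := hx3.2 hbgg
                omega
            · rw [hfv u hu, hfv v hv]
              have := b2 u v ⟨hadj, hu, hv⟩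
              rw [hcup u hu, hcup v hv] at this
              exact this
        · intro v hvR hcv
          by_cases hv : v = r
          · rw [hv, hfr]
            refine ⟨le_refl 1, fun hb => ?_⟩
            unfold bgg at hb
            rw [if_pos hrR] at hb
            omega
          · have h3 := b3 v (Finset.mem_union_left _ (Finset.mem_erase.2 ⟨hv, hvR⟩))
              (by rw [hcup v hv]; exact hcv)
            rw [hfv v hv]
            exact ⟨h3.1, fun hb => h3.2 ((bgg_cut hv hNnotR).2 hb)⟩

end AuxProof

/-- If `T` is a tree with no two adjacent vertices both of degree at least three,
then `χ⃗(T) ≤ 2`. -/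
theorem properOrientNum_tree_le_two {V : Type*} [Fintype V]
    (T : SimpleGraph V) [DecidableRel T.Adj] (hT : T.IsTree)
    (h : ∀ u v, T.Adj u v → ¬ (3 ≤ T.degree u ∧ 3 ≤ T.degree v)) :
    properOrientNum T ≤ 2 := by
  classical
  obtain ⟨r, hr⟩ : ∃ r : V, T.degree r ≤ 1 := by
    by_contra hcon
    push_neg at hcon
    have hsum := T.sum_degrees_eq_twice_card_edges
    have hcard := hT.card_edgeFinset
    have h2 : 2 * Fintype.card V ≤ ∑ v, T.degree v := by
      calc 2 * Fintype.card V = ∑ _v : V, 2 := by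
            rw [Finset.sum_const, Finset.card_univ]; ring
        _ ≤ ∑ v, T.degree v := Finset.sum_le_sum (fun v _ => hcon v)
    have hpos : 1 ≤ Fintype.card V := @Fintype.card_pos V _ hT.isConnected.nonempty
    omega
  have key : ∀ w, bgg T {r} w → 3 ≤ T.degree w := by
    intro w hb
    unfold bgg at hb
    by_cases hw : w ∈ ({r} : Finset V)
    · rw [if_pos hw] at hb
      rw [Finset.mem_singleton] at hw
      rw [hw] at hb
      omega
    · rw [if_neg hw] at hb
      omega
  obtain ⟨D, b1, b2, -⟩ := main_lemma (2 * T.edgeFinset.card + 1) T {r} (fun _ => 0)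
    (by simp)
    hT.IsAcyclic
    (fun v => Nat.zero_le 1)
    (fun v _ => rfl)
    (fun v h0 => absurd h0 (by simp))
    (fun u v hadj hb => h u v hadj ⟨key u hb.1, key v hb.2⟩)
    (by intro x y hx hy hxy
        rw [Finset.mem_singleton] at hx hy
        rw [hx, hy] at hxy
        exact absurd rfl hxy)
    (fun v _ => ⟨r, Finset.mem_singleton_self r, hT.isConnected.preconnected r v⟩)
  refine Nat.sInf_le ⟨D, ?_, ?_⟩
  · intro u v hadj
    have := b2 u v hadj
    simpa using this
  · intro v
    have := b1 v
    omega
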